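/- Let A_x ∈ ℝ^{p×p} be Hurwitz, let B_x, C_x ∈ ℝ^{p×p} be invertible, and let K ∈ ℝ^{(n−p)×p} be such that A22 + K·A12 is Hurwitz. Define Θ := C_x·(λI_p − A_x)^{-1}·B_x ∈ F^{p×p}, Â := [[A_x, B_x·A12],[0, A22 + K·A12]] ∈ ℝ^{n×n}, B̂ := [[A_x·B_x − B_x·A11 + B_x·A12·K, B_x·B1],[K·A12·K + A22·K − K·A11 − A21, K·B1 + B2]] ∈ ℝ^{n×(p+m)}, and [M N] := [C_x, 0]·(λI_n − Â)^{-1}·B̂ + [C_x·B_x, 0] with M ∈ F^{p×p}, N ∈ F^{p×m}. Then Θ·(λI_p − W) = M and Θ·V = N; moreover M is invertible over F, M^{-1}·N = G, and every entry of M and of N is stable. -/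

import Mathlib

open Matrix Polynomial

set_option synthInstance.maxHeartbeats 1000000
set_option maxHeartbeats 1000000

noncomputable section

/-- The field of real rational functions. -/
abbrev FF : Type := RatFunc ℝ

/-- The rational function `λ` (the image of the polynomial indeterminate `X`). -/
noncomputable def lam : FF := RatFunc.X

/-- Entrywise embedding of a real matrix into matrices over `FF`. -/
noncomputable def mapF {k l : Type} (M : Matrix k l ℝ) : Matrix k l FF :=
  M.map (algebraMap ℝ FF)

/-- The pencil `λ I - M` over `FF`, for a real square matrix `M`. -/
noncomputable def lamI {k : Type} [Fintype k] [DecidableEq k] (M : Matrix k k ℝ) :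
    Matrix k k FF := lam • (1 : Matrix k k FF) - mapF M

/-- Entrywise complexification of a real matrix. -/
def mapC {k l : Type} (M : Matrix k l ℝ) : Matrix k l ℂ :=
  M.map (algebraMap ℝ ℂ)

/-- A real rational function is stable if every complex root of its reduced denominator
has real part `< 0`. -/
def StableF (f : RatFunc ℝ) : Prop :=
  ∀ z : ℂ, ((f.denom).map (algebraMap ℝ ℂ)).IsRoot z → z.re < 0

/-- A real square matrix is Hurwitz if all roots of its characteristic polynomial
have real part `< 0`. -/
def IsHurwitz {k : Type} [Fintype k] [DecidableEq k] (M : Matrix k k ℝ) : Prop :=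
  ∀ z : ℂ, ((M.charpoly).map (algebraMap ℝ ℂ)).IsRoot z → z.re < 0

/-- `A_K := K A11 - K A12 K + A21 - A22 K`. -/
noncomputable def AKmat {p r : ℕ} (A11 : Matrix (Fin p) (Fin p) ℝ)
    (A12 : Matrix (Fin p) (Fin r) ℝ) (A21 : Matrix (Fin r) (Fin p) ℝ)
    (A22 : Matrix (Fin r) (Fin r) ℝ) (K : Matrix (Fin r) (Fin p) ℝ) :
    Matrix (Fin r) (Fin p) ℝ :=
  K * A11 - K * A12 * K + A21 - A22 * K

/-- The `W` member of the SRTR pair obtained from `K`. -/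
noncomputable def srtrW {p r : ℕ} (A11 : Matrix (Fin p) (Fin p) ℝ)
    (A12 : Matrix (Fin p) (Fin r) ℝ) (A21 : Matrix (Fin r) (Fin p) ℝ)
    (A22 : Matrix (Fin r) (Fin r) ℝ) (K : Matrix (Fin r) (Fin p) ℝ) :
    Matrix (Fin p) (Fin p) FF :=
  mapF (A11 - A12 * K) +
    mapF A12 * (lamI (A22 + K * A12))⁻¹ * mapF (AKmat A11 A12 A21 A22 K)

/-- The `V` member of the SRTR pair obtained from `K`. -/
noncomputable def srtrV {p r m : ℕ} (A12 : Matrix (Fin p) (Fin r) ℝ)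
    (A22 : Matrix (Fin r) (Fin r) ℝ) (B1 : Matrix (Fin p) (Fin m) ℝ)
    (B2 : Matrix (Fin r) (Fin m) ℝ) (K : Matrix (Fin r) (Fin p) ℝ) :
    Matrix (Fin p) (Fin m) FF :=
  mapF B1 + mapF A12 * (lamI (A22 + K * A12))⁻¹ * mapF (K * B1 + B2)

/-- The plant transfer function `G = [I_p 0] (λ I_n - A)⁻¹ B`. -/
noncomputable def plantG {p r m : ℕ} (A11 : Matrix (Fin p) (Fin p) ℝ)
    (A12 : Matrix (Fin p) (Fin r) ℝ) (A21 : Matrix (Fin r) (Fin p) ℝ)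
    (A22 : Matrix (Fin r) (Fin r) ℝ) (B1 : Matrix (Fin p) (Fin m) ℝ)
    (B2 : Matrix (Fin r) (Fin m) ℝ) : Matrix (Fin p) (Fin m) FF :=
  fromCols (1 : Matrix (Fin p) (Fin p) FF) (0 : Matrix (Fin p) (Fin r) FF) *
    (lamI (fromBlocks A11 A12 A21 A22))⁻¹ * mapF (fromRows B1 B2)

/-- `(A12, A22)` is observable: `[A22 - μ I ; A12]` has full column rank for all `μ : ℂ`. -/
def ObsPair {p r : ℕ} (A12 : Matrix (Fin p) (Fin r) ℝ)
    (A22 : Matrix (Fin r) (Fin r) ℝ) : Prop :=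
  ∀ μ : ℂ, (fromRows (mapC A22 - μ • (1 : Matrix (Fin r) (Fin r) ℂ)) (mapC A12)).rank = r

/-- `(A, B)` is controllable: `[A - μ I, B]` has full row rank for all `μ : ℂ`. -/
def CtrbPair {p r m : ℕ} (A : Matrix (Fin p ⊕ Fin r) (Fin p ⊕ Fin r) ℝ)
    (B : Matrix (Fin p ⊕ Fin r) (Fin m) ℝ) : Prop :=
  ∀ μ : ℂ, (fromCols (mapC A - μ • (1 : Matrix (Fin p ⊕ Fin r) (Fin p ⊕ Fin r) ℂ))
    (mapC B)).rank = p + r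

-- infrastructure
lemma algR_eq (x : ℝ) : algebraMap ℝ FF x = algebraMap ℝ[X] FF (C x) := by
  rw [IsScalarTower.algebraMap_apply ℝ ℝ[X] FF, Polynomial.algebraMap_eq]

variable {k : Type} [Fintype k] [DecidableEq k]

lemma lamI_eq_charmatrix_map (M : Matrix k k ℝ) :
    lamI M = (charmatrix M).map (algebraMap ℝ[X] FF) := by
  ext i j
  rcases eq_or_ne i j with h | h
  · subst h
    simp [lamI, mapF, charmatrix_apply, algR_eq, lam, RatFunc.algebraMap_X]
  · simp [lamI, mapF, charmatrix_apply, h, algR_eq, one_apply_ne h]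

lemma det_lamI (M : Matrix k k ℝ) :
    (lamI M).det = algebraMap ℝ[X] FF M.charpoly := by
  rw [lamI_eq_charmatrix_map, ← RingHom.mapMatrix_apply, ← RingHom.map_det]; rfl

lemma det_lamI_ne_zero (M : Matrix k k ℝ) : (lamI M).det ≠ 0 := by
  rw [det_lamI]
  exact RatFunc.algebraMap_ne_zero (M.charpoly_monic.ne_zero)

lemma isUnit_det_lamI (M : Matrix k k ℝ) : IsUnit (lamI M).det :=
  isUnit_iff_ne_zero.2 (det_lamI_ne_zero M)

lemma isUnit_lamI (M : Matrix k k ℝ) : IsUnit (lamI M) :=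
  (isUnit_iff_isUnit_det _).2 (isUnit_det_lamI M)

lemma lamI_mul_inv (M : Matrix k k ℝ) : lamI M * (lamI M)⁻¹ = 1 :=
  mul_nonsing_inv _ (isUnit_det_lamI M)

lemma inv_mul_lamI (M : Matrix k k ℝ) : (lamI M)⁻¹ * lamI M = 1 :=
  nonsing_inv_mul _ (isUnit_det_lamI M)

lemma inv_lamI (M : Matrix k k ℝ) :
    (lamI M)⁻¹ = (algebraMap ℝ[X] FF M.charpoly)⁻¹ •
      (adjugate (charmatrix M)).map (algebraMap ℝ[X] FF) := by
  rw [Matrix.inv_def, det_lamI, lamI_eq_charmatrix_map, ← RingHom.mapMatrix_apply,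
    ← RingHom.map_adjugate, Ring.inverse_eq_inv', RingHom.mapMatrix_apply]

-- mapF lemmas
lemma mapF_mul {a b c : Type} [Fintype b] (M : Matrix a b ℝ) (N : Matrix b c ℝ) :
    mapF (M * N) = mapF M * mapF N := Matrix.map_mul
lemma mapF_add {a b : Type} (M N : Matrix a b ℝ) : mapF (M + N) = mapF M + mapF N :=
  Matrix.map_add _ (by simp) _ _
lemma mapF_sub {a b : Type} (M N : Matrix a b ℝ) : mapF (M - N) = mapF M - mapF N :=
  Matrix.map_sub _ (by simp) _ _
lemma mapF_neg {a b : Type} (M : Matrix a b ℝ) : mapF (-M) = -mapF M := by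
  ext i j; simp [mapF]
omit [Fintype k] in
lemma mapF_one : mapF (1 : Matrix k k ℝ) = 1 := Matrix.map_one _ (by simp) (by simp)
lemma mapF_zero {a b : Type} : mapF (0 : Matrix a b ℝ) = 0 := by
  ext i j; simp [mapF]
lemma mapF_fromBlocks {a b c d : Type} (A : Matrix a c ℝ) (B : Matrix a d ℝ)
    (C : Matrix b c ℝ) (D : Matrix b d ℝ) :
    mapF (fromBlocks A B C D) = fromBlocks (mapF A) (mapF B) (mapF C) (mapF D) :=
  Matrix.fromBlocks_map _ _ _ _ _

lemma mapF_fromRows {a b c : Type} (A : Matrix a c ℝ) (B : Matrix b c ℝ) :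
    mapF (fromRows A B) = fromRows (mapF A) (mapF B) := by
  ext (i | i) j <;> simp [mapF, fromRows_apply_inl, fromRows_apply_inr]

lemma lamI_fromBlocks {a b : Type} [Fintype a] [DecidableEq a] [Fintype b] [DecidableEq b]
    (A : Matrix a a ℝ) (B : Matrix a b ℝ) (C : Matrix b a ℝ) (D : Matrix b b ℝ) :
    lamI (fromBlocks A B C D) =
      fromBlocks (lamI A) (-mapF B) (-mapF C) (lamI D) := by
  ext (i | i) (j | j) <;>
    simp [lamI, mapF_fromBlocks, Matrix.one_apply, Matrix.fromBlocks, Matrix.sub_apply,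
      mapF, Sum.inl.injEq, Sum.inr.injEq]

lemma isUnit_mapF {M : Matrix k k ℝ} (hM : IsUnit M) : IsUnit (mapF M) := by
  rw [Matrix.isUnit_iff_isUnit_det] at hM ⊢
  rw [mapF, ← RingHom.mapMatrix_apply, ← RingHom.map_det]
  exact hM.map _

lemma stable_entry {q : ℝ[X]} (hq : q ≠ 0)
    (hroots : ∀ z : ℂ, (q.map (algebraMap ℝ ℂ)).IsRoot z → z.re < 0) {f : FF} (P : ℝ[X])
    (hf : f = algebraMap ℝ[X] FF P / algebraMap ℝ[X] FF q) :
    (∀ z : ℂ, ((f.denom).map (algebraMap ℝ ℂ)).IsRoot z → z.re < 0) := by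
  have hd : f.denom ∣ q := (RatFunc.denom_dvd hq).2 ⟨P, hf⟩
  obtain ⟨t, ht⟩ := hd
  intro z hz
  apply hroots
  rw [ht, Polynomial.map_mul]
  simp only [Polynomial.IsRoot, Polynomial.eval_mul] at hz ⊢
  rw [hz, zero_mul]

section MainHelpers
variable {p r m : ℕ}
variable (A11 : Matrix (Fin p) (Fin p) ℝ) (A12 : Matrix (Fin p) (Fin r) ℝ)
  (A21 : Matrix (Fin r) (Fin p) ℝ) (A22 : Matrix (Fin r) (Fin r) ℝ)
  (B1 : Matrix (Fin p) (Fin m) ℝ) (B2 : Matrix (Fin r) (Fin m) ℝ)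
  (Ax Bx Cx : Matrix (Fin p) (Fin p) ℝ) (K : Matrix (Fin r) (Fin p) ℝ)

lemma inv_lamI_Ahat :
    (lamI (fromBlocks Ax (Bx * A12) 0 (A22 + K * A12)))⁻¹ =
      fromBlocks (lamI Ax)⁻¹
        ((lamI Ax)⁻¹ * mapF (Bx * A12) * (lamI (A22 + K * A12))⁻¹) 0
        (lamI (A22 + K * A12))⁻¹ := by
  rw [lamI_fromBlocks, mapF_zero, neg_zero,
    inv_fromBlocks_zero₂₁_of_isUnit_iff _ _ _
      (iff_of_true (isUnit_lamI _) (isUnit_lamI _))]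
  simp

lemma fromCols_add' {a b c : Type} [Fintype a] (A C : Matrix a b FF) (B D : Matrix a c FF) :
    fromCols A B + fromCols C D = fromCols (A + C) (B + D) := by
  ext i (j | j) <;> simp

lemma MN_eq :
    fromCols (mapF Cx) (0 : Matrix (Fin p) (Fin r) FF) *
        (lamI (fromBlocks Ax (Bx * A12) 0 (A22 + K * A12)))⁻¹ *
        mapF (fromBlocks (Ax * Bx - Bx * A11 + Bx * A12 * K) (Bx * B1)
          (K * A12 * K + A22 * K - K * A11 - A21) (K * B1 + B2)) +
        fromCols (mapF (Cx * Bx)) (0 : Matrix (Fin p) (Fin m) FF) =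
      fromCols
        (mapF Cx * (lamI Ax)⁻¹ * mapF (Ax * Bx - Bx * A11 + Bx * A12 * K) +
          mapF Cx * ((lamI Ax)⁻¹ * mapF (Bx * A12) * (lamI (A22 + K * A12))⁻¹) *
            mapF (K * A12 * K + A22 * K - K * A11 - A21) + mapF (Cx * Bx))
        (mapF Cx * (lamI Ax)⁻¹ * mapF (Bx * B1) +
          mapF Cx * ((lamI Ax)⁻¹ * mapF (Bx * A12) * (lamI (A22 + K * A12))⁻¹) *
            mapF (K * B1 + B2)) := by
  rw [inv_lamI_Ahat, mapF_fromBlocks, fromCols_mul_fromBlocks, fromCols_mul_fromBlocks,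
    fromCols_add']
  congr 1 <;> simp [Matrix.add_mul, Matrix.mul_assoc] <;> abel


lemma key_lam (Ax Bx : Matrix (Fin p) (Fin p) ℝ) :
    lam • ((lamI Ax)⁻¹ * mapF Bx) = mapF Bx + (lamI Ax)⁻¹ * (mapF Ax * mapF Bx) := by
  have h1 : lam • mapF Bx = lamI Ax * mapF Bx + mapF Ax * mapF Bx := by
    rw [lamI, Matrix.sub_mul, smul_mul_assoc, Matrix.one_mul, sub_add_cancel]
  rw [← mul_smul_comm, h1, Matrix.mul_add, ← Matrix.mul_assoc, inv_mul_lamI, Matrix.one_mul]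

lemma goal2_lemma :
    mapF Cx * (lamI Ax)⁻¹ * mapF Bx * srtrV A12 A22 B1 B2 K =
      mapF Cx * (lamI Ax)⁻¹ * mapF (Bx * B1) +
        mapF Cx * ((lamI Ax)⁻¹ * mapF (Bx * A12) * (lamI (A22 + K * A12))⁻¹) *
          mapF (K * B1 + B2) := by
  rw [srtrV]
  simp only [mapF_mul, mapF_add, Matrix.mul_add, Matrix.mul_assoc]

lemma goal1_lemma :
    mapF Cx * (lamI Ax)⁻¹ * mapF Bx *
        (lam • (1 : Matrix (Fin p) (Fin p) FF) - srtrW A11 A12 A21 A22 K) =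
      mapF Cx * (lamI Ax)⁻¹ * mapF (Ax * Bx - Bx * A11 + Bx * A12 * K) +
        mapF Cx * ((lamI Ax)⁻¹ * mapF (Bx * A12) * (lamI (A22 + K * A12))⁻¹) *
          mapF (K * A12 * K + A22 * K - K * A11 - A21) + mapF (Cx * Bx) := by
  have hAK : (K * A12 * K + A22 * K - K * A11 - A21) = -(AKmat A11 A12 A21 A22 K) := by
    rw [AKmat]; abel
  rw [srtrW, hAK]
  have key := key_lam Ax Bx
  simp only [mapF_mul, mapF_add, mapF_sub, mapF_neg, Matrix.mul_sub, Matrix.sub_mul,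
    Matrix.mul_add, Matrix.add_mul, Matrix.mul_assoc, Matrix.mul_one, Matrix.one_mul,
    mul_smul_comm, smul_mul_assoc, Matrix.mul_neg, Matrix.neg_mul]
  rw [← mul_smul_comm, key]
  simp only [Matrix.mul_add, Matrix.mul_sub, Matrix.mul_assoc]
  abel


lemma S_eq :
    lam • (1 : Matrix (Fin p) (Fin p) FF) - srtrW A11 A12 A21 A22 K =
      lamI (A11 - A12 * K) -
        mapF A12 * (lamI (A22 + K * A12))⁻¹ * mapF (AKmat A11 A12 A21 A22 K) := by
  rw [srtrW, sub_add_eq_sub_sub]; rfl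

lemma det_S :
    (lamI (fromBlocks (A11 - A12 * K) A12 (AKmat A11 A12 A21 A22 K) (A22 + K * A12))).det =
      (lamI (A22 + K * A12)).det *
        (lam • (1 : Matrix (Fin p) (Fin p) FF) - srtrW A11 A12 A21 A22 K).det := by
  rw [lamI_fromBlocks]
  letI := (lamI (A22 + K * A12)).invertibleOfIsUnitDet (isUnit_det_lamI _)
  rw [det_fromBlocks₂₂, invOf_eq_nonsing_inv, S_eq]
  congr 2
  simp [Matrix.neg_mul, Matrix.mul_neg]

lemma isUnit_det_S :
    IsUnit (lam • (1 : Matrix (Fin p) (Fin p) FF) - srtrW A11 A12 A21 A22 K).det := by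
  rw [isUnit_iff_ne_zero]
  intro h
  apply det_lamI_ne_zero (fromBlocks (A11 - A12 * K) A12 (AKmat A11 A12 A21 A22 K) (A22 + K * A12))
  rw [det_S, h, mul_zero]

lemma isUnit_S :
    IsUnit (lam • (1 : Matrix (Fin p) (Fin p) FF) - srtrW A11 A12 A21 A22 K) :=
  (Matrix.isUnit_iff_isUnit_det _).2 (isUnit_det_S A11 A12 A21 A22 K)

lemma isUnit_Theta (hBx : IsUnit Bx) (hCx : IsUnit Cx) :
    IsUnit (mapF Cx * (lamI Ax)⁻¹ * mapF Bx) :=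
  ((isUnit_mapF hCx).mul (Matrix.isUnit_nonsing_inv_iff.2 (isUnit_lamI Ax))).mul (isUnit_mapF hBx)

lemma inv_lamI_Atil :
    (lamI (fromBlocks (A11 - A12 * K) A12 (AKmat A11 A12 A21 A22 K) (A22 + K * A12)))⁻¹ =
      fromBlocks
        (lam • (1 : Matrix (Fin p) (Fin p) FF) - srtrW A11 A12 A21 A22 K)⁻¹
        ((lam • (1 : Matrix (Fin p) (Fin p) FF) - srtrW A11 A12 A21 A22 K)⁻¹ * mapF A12 *
          (lamI (A22 + K * A12))⁻¹)
        ((lamI (A22 + K * A12))⁻¹ * mapF (AKmat A11 A12 A21 A22 K) *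
          (lam • (1 : Matrix (Fin p) (Fin p) FF) - srtrW A11 A12 A21 A22 K)⁻¹)
        ((lamI (A22 + K * A12))⁻¹ + (lamI (A22 + K * A12))⁻¹ * mapF (AKmat A11 A12 A21 A22 K) *
          (lam • (1 : Matrix (Fin p) (Fin p) FF) - srtrW A11 A12 A21 A22 K)⁻¹ * mapF A12 *
          (lamI (A22 + K * A12))⁻¹) := by
  set S := lam • (1 : Matrix (Fin p) (Fin p) FF) - srtrW A11 A12 A21 A22 K with hSdef
  have hSSi : S * S⁻¹ = 1 := mul_nonsing_inv _ (isUnit_det_S A11 A12 A21 A22 K)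
  have cS : ∀ {t : Type} (Y : Matrix (Fin p) t FF), S * (S⁻¹ * Y) = Y := by
    intro t Y; rw [← Matrix.mul_assoc, hSSi, Matrix.one_mul]
  have cZ : ∀ {t : Type} (Y : Matrix (Fin r) t FF),
      lamI (A22 + K * A12) * ((lamI (A22 + K * A12))⁻¹ * Y) = Y := by
    intro t Y; rw [← Matrix.mul_assoc, lamI_mul_inv, Matrix.one_mul]
  have hE : lamI (A11 - A12 * K) =
      S + mapF A12 * (lamI (A22 + K * A12))⁻¹ * mapF (AKmat A11 A12 A21 A22 K) := by
    rw [hSdef, S_eq, sub_add_cancel]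
  apply Matrix.inv_eq_right_inv
  rw [lamI_fromBlocks, fromBlocks_multiply, ← fromBlocks_one]
  rw [fromBlocks_inj]
  refine ⟨?_, ?_, ?_, ?_⟩
  · rw [hE]
    simp only [Matrix.add_mul, Matrix.neg_mul, Matrix.mul_assoc, cS, hSSi, lamI_mul_inv]
    abel
  · rw [hE]
    simp only [Matrix.add_mul, Matrix.neg_mul, Matrix.mul_add, Matrix.mul_assoc, cS, cZ,
      lamI_mul_inv]
    abel
  · simp only [Matrix.add_mul, Matrix.neg_mul, Matrix.mul_add, Matrix.mul_assoc, cS, cZ,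
      lamI_mul_inv]
    abel
  · simp only [Matrix.add_mul, Matrix.neg_mul, Matrix.mul_add, Matrix.mul_assoc, cS, cZ,
      lamI_mul_inv]
    abel


noncomputable def TmF (K : Matrix (Fin r) (Fin p) ℝ) : Matrix (Fin p ⊕ Fin r) (Fin p ⊕ Fin r) FF :=
  fromBlocks 1 0 (mapF K) 1

noncomputable def TmiF (K : Matrix (Fin r) (Fin p) ℝ) : Matrix (Fin p ⊕ Fin r) (Fin p ⊕ Fin r) FF :=
  fromBlocks 1 0 (-mapF K) 1

lemma sim_eq :
    TmF K * lamI (fromBlocks A11 A12 A21 A22) =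
      lamI (fromBlocks (A11 - A12 * K) A12 (AKmat A11 A12 A21 A22 K) (A22 + K * A12)) * TmF K := by
  rw [TmF, lamI_fromBlocks, lamI_fromBlocks, fromBlocks_multiply, fromBlocks_multiply,
    fromBlocks_inj]
  refine ⟨?_, ?_, ?_, ?_⟩ <;>
    simp only [lamI, AKmat, mapF_sub, mapF_add, mapF_mul, mapF_neg, Matrix.one_mul,
      Matrix.mul_one, Matrix.zero_mul, Matrix.mul_zero, Matrix.sub_mul, Matrix.mul_sub,
      Matrix.add_mul, Matrix.mul_add, Matrix.neg_mul, Matrix.mul_neg, smul_mul_assoc,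
      mul_smul_comm, Matrix.mul_smul, Matrix.smul_mul, Matrix.mul_assoc, add_zero, zero_add, smul_zero] <;>
    abel

lemma TmTmi : TmF (p := p) K * TmiF K = 1 := by
  rw [TmF, TmiF, fromBlocks_multiply, ← fromBlocks_one, fromBlocks_inj]
  refine ⟨by simp, by simp, by simp, by simp⟩

lemma TmiTm : TmiF (p := p) K * TmF K = 1 := by
  rw [TmF, TmiF, fromBlocks_multiply, ← fromBlocks_one, fromBlocks_inj]
  refine ⟨by simp, by simp, by simp, by simp⟩

lemma inv_lamI_Afull :
    (lamI (fromBlocks A11 A12 A21 A22))⁻¹ =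
      TmiF K *
        (lamI (fromBlocks (A11 - A12 * K) A12 (AKmat A11 A12 A21 A22 K) (A22 + K * A12)))⁻¹ *
        TmF K := by
  have hAfull : lamI (fromBlocks A11 A12 A21 A22) =
      TmiF K *
        (lamI (fromBlocks (A11 - A12 * K) A12 (AKmat A11 A12 A21 A22 K) (A22 + K * A12)) *
          TmF K) := by
    rw [← sim_eq, ← Matrix.mul_assoc, TmiTm, Matrix.one_mul]
  apply Matrix.inv_eq_right_inv
  rw [hAfull]
  simp only [Matrix.mul_assoc]
  rw [← Matrix.mul_assoc (TmF K), TmTmi,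
    Matrix.one_mul, ← Matrix.mul_assoc (lamI _), lamI_mul_inv, Matrix.one_mul, TmiTm]

lemma plantG_eq :
    plantG A11 A12 A21 A22 B1 B2 =
      (lam • (1 : Matrix (Fin p) (Fin p) FF) - srtrW A11 A12 A21 A22 K)⁻¹ *
        srtrV A12 A22 B1 B2 K := by
  have h1 : fromCols (1 : Matrix (Fin p) (Fin p) FF) (0 : Matrix (Fin p) (Fin r) FF) *
      TmiF K = fromCols 1 0 := by
    rw [TmiF, fromCols_mul_fromBlocks]; simp
  rw [plantG, mapF_fromRows, inv_lamI_Afull A11 A12 A21 A22 K, inv_lamI_Atil]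
  simp only [← Matrix.mul_assoc]
  rw [h1, TmF, fromCols_mul_fromBlocks, fromCols_mul_fromBlocks, fromCols_mul_fromRows,
    srtrV]
  simp only [Matrix.one_mul, Matrix.zero_mul, Matrix.mul_one, Matrix.mul_zero, add_zero, zero_add,
    mapF_add, mapF_mul, Matrix.mul_add, Matrix.add_mul, Matrix.mul_assoc]
  abel


lemma map_smulP {a b : Type} (q : ℝ[X]) (A : Matrix a b ℝ[X]) :
    (q • A).map (algebraMap ℝ[X] FF) =
      algebraMap ℝ[X] FF q • A.map (algebraMap ℝ[X] FF) := by
  ext i j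
  simp [Matrix.map_apply, Matrix.smul_apply, smul_eq_mul]

lemma map_fromColsP {a b c : Type} (f : ℝ[X] → FF) (A : Matrix a b ℝ[X])
    (B : Matrix a c ℝ[X]) :
    (fromCols A B).map f = fromCols (A.map f) (B.map f) := by
  ext i (j | j) <;> simp [fromCols]

lemma mapF_eq_double {a b : Type} (M : Matrix a b ℝ) :
    mapF M = (M.map (fun x => (C x : ℝ[X]))).map (algebraMap ℝ[X] FF) := by
  rw [Matrix.map_map]
  ext i j
  simp [mapF, Matrix.map_apply, algR_eq]

lemma q_roots (hAx : IsHurwitz Ax) (hK : IsHurwitz (A22 + K * A12)) :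
    ∀ z : ℂ, (((fromBlocks Ax (Bx * A12) 0 (A22 + K * A12)).charpoly).map
      (algebraMap ℝ ℂ)).IsRoot z → z.re < 0 := by
  intro z hz
  rw [Matrix.charpoly_fromBlocks_zero₂₁, Polynomial.map_mul] at hz
  simp only [Polynomial.IsRoot, Polynomial.eval_mul] at hz
  rcases mul_eq_zero.1 hz with h | h
  · exact hAx z h
  · exact hK z h

lemma MN_entry_form (i : Fin p) (j : Fin p ⊕ Fin m) :
    ∃ P : ℝ[X],
      (fromCols (mapF Cx) (0 : Matrix (Fin p) (Fin r) FF) *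
          (lamI (fromBlocks Ax (Bx * A12) 0 (A22 + K * A12)))⁻¹ *
          mapF (fromBlocks (Ax * Bx - Bx * A11 + Bx * A12 * K) (Bx * B1)
            (K * A12 * K + A22 * K - K * A11 - A21) (K * B1 + B2)) +
          fromCols (mapF (Cx * Bx)) (0 : Matrix (Fin p) (Fin m) FF)) i j =
        algebraMap ℝ[X] FF P /
          algebraMap ℝ[X] FF ((fromBlocks Ax (Bx * A12) 0 (A22 + K * A12)).charpoly) := by
  set Ah : Matrix (Fin p ⊕ Fin r) (Fin p ⊕ Fin r) ℝ :=
    fromBlocks Ax (Bx * A12) 0 (A22 + K * A12) with hAh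
  set Bh : Matrix (Fin p ⊕ Fin r) (Fin p ⊕ Fin m) ℝ :=
    fromBlocks (Ax * Bx - Bx * A11 + Bx * A12 * K) (Bx * B1)
      (K * A12 * K + A22 * K - K * A11 - A21) (K * B1 + B2) with hBh
  have hq : algebraMap ℝ[X] FF Ah.charpoly ≠ 0 :=
    RatFunc.algebraMap_ne_zero (Ah.charpoly_monic.ne_zero)
  set Cpoly : Matrix (Fin p) (Fin p ⊕ Fin r) ℝ[X] :=
    fromCols (Cx.map (fun x => (C x : ℝ[X]))) 0 with hCpoly
  set Kpoly : Matrix (Fin p) (Fin p ⊕ Fin m) ℝ[X] :=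
    fromCols ((Cx * Bx).map (fun x => (C x : ℝ[X]))) 0 with hKpoly
  refine ⟨(Cpoly * adjugate (charmatrix Ah) * (Bh.map (fun x => (C x : ℝ[X]))) +
    Ah.charpoly • Kpoly) i j, ?_⟩
  have hmat :
      fromCols (mapF Cx) (0 : Matrix (Fin p) (Fin r) FF) * (lamI Ah)⁻¹ *
          mapF Bh + fromCols (mapF (Cx * Bx)) (0 : Matrix (Fin p) (Fin m) FF) =
        (algebraMap ℝ[X] FF Ah.charpoly)⁻¹ •
          ((Cpoly * adjugate (charmatrix Ah) * (Bh.map (fun x => (C x : ℝ[X]))) +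
            Ah.charpoly • Kpoly).map (algebraMap ℝ[X] FF)) := by
    have hC : Cpoly.map (algebraMap ℝ[X] FF) =
        fromCols (mapF Cx) (0 : Matrix (Fin p) (Fin r) FF) := by
      rw [hCpoly, map_fromColsP, ← mapF_eq_double, Matrix.map_zero _ (map_zero _)]
    have hB : (Bh.map (fun x => (C x : ℝ[X]))).map (algebraMap ℝ[X] FF) = mapF Bh :=
      (mapF_eq_double Bh).symm
    have hK2 : Kpoly.map (algebraMap ℝ[X] FF) =
        fromCols (mapF (Cx * Bx)) (0 : Matrix (Fin p) (Fin m) FF) := by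
      rw [hKpoly, map_fromColsP, ← mapF_eq_double, Matrix.map_zero _ (map_zero _)]
    rw [inv_lamI, Matrix.map_add _ (fun a b => map_add (algebraMap ℝ[X] FF) a b), Matrix.map_mul, Matrix.map_mul, map_smulP, hC, hB, hK2,
      smul_add, smul_smul, inv_mul_cancel₀ hq, one_smul, Matrix.mul_smul, Matrix.smul_mul]
  rw [hmat]
  simp only [Matrix.smul_apply, Matrix.map_apply, smul_eq_mul]
  rw [div_eq_inv_mul]

end MainHelpers


/-- multiplying `[λ I_p - W, V]` by `Θ = C_x (λ I - A_x)⁻¹ B_x` yields an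
LCF over the stability domain: `Θ (λ I_p - W) = M`, `Θ V = N`, `M` is invertible,
`M⁻¹ N = G`, and all entries of `M` and `N` are stable. -/
theorem stmt_8 (p r m : ℕ) (hp : 0 < p) (hr : 0 < r) (hm : 0 < m)
    (A11 : Matrix (Fin p) (Fin p) ℝ) (A12 : Matrix (Fin p) (Fin r) ℝ)
    (A21 : Matrix (Fin r) (Fin p) ℝ) (A22 : Matrix (Fin r) (Fin r) ℝ)
    (B1 : Matrix (Fin p) (Fin m) ℝ) (B2 : Matrix (Fin r) (Fin m) ℝ)
    (Ax Bx Cx : Matrix (Fin p) (Fin p) ℝ)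
    (hAx : IsHurwitz Ax) (hBx : IsUnit Bx) (hCx : IsUnit Cx)
    (K : Matrix (Fin r) (Fin p) ℝ) (hK : IsHurwitz (A22 + K * A12)) :
    let Theta : Matrix (Fin p) (Fin p) FF := mapF Cx * (lamI Ax)⁻¹ * mapF Bx
    let Ahat : Matrix (Fin p ⊕ Fin r) (Fin p ⊕ Fin r) ℝ :=
      fromBlocks Ax (Bx * A12) 0 (A22 + K * A12)
    let Bhat : Matrix (Fin p ⊕ Fin r) (Fin p ⊕ Fin m) ℝ :=
      fromBlocks (Ax * Bx - Bx * A11 + Bx * A12 * K) (Bx * B1)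
        (K * A12 * K + A22 * K - K * A11 - A21) (K * B1 + B2)
    let MN : Matrix (Fin p) (Fin p ⊕ Fin m) FF :=
      fromCols (mapF Cx) (0 : Matrix (Fin p) (Fin r) FF) * (lamI Ahat)⁻¹ * mapF Bhat +
        fromCols (mapF (Cx * Bx)) (0 : Matrix (Fin p) (Fin m) FF)
    let M : Matrix (Fin p) (Fin p) FF := MN.toCols₁
    let N : Matrix (Fin p) (Fin m) FF := MN.toCols₂
    Theta * (lam • (1 : Matrix (Fin p) (Fin p) FF) - srtrW A11 A12 A21 A22 K) = M ∧
    Theta * srtrV A12 A22 B1 B2 K = N ∧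
    IsUnit M ∧
    M⁻¹ * N = plantG A11 A12 A21 A22 B1 B2 ∧
    (∀ i j, StableF (M i j)) ∧ (∀ i j, StableF (N i j)) := by
  intro Theta Ahat Bhat MN M N
  have hMNeq : MN =
      fromCols
        (mapF Cx * (lamI Ax)⁻¹ * mapF (Ax * Bx - Bx * A11 + Bx * A12 * K) +
          mapF Cx * ((lamI Ax)⁻¹ * mapF (Bx * A12) * (lamI (A22 + K * A12))⁻¹) *
            mapF (K * A12 * K + A22 * K - K * A11 - A21) + mapF (Cx * Bx))
        (mapF Cx * (lamI Ax)⁻¹ * mapF (Bx * B1) +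
          mapF Cx * ((lamI Ax)⁻¹ * mapF (Bx * A12) * (lamI (A22 + K * A12))⁻¹) *
            mapF (K * B1 + B2)) := MN_eq A11 A12 A21 A22 B1 B2 Ax Bx Cx K
  have hM : M = mapF Cx * (lamI Ax)⁻¹ * mapF (Ax * Bx - Bx * A11 + Bx * A12 * K) +
      mapF Cx * ((lamI Ax)⁻¹ * mapF (Bx * A12) * (lamI (A22 + K * A12))⁻¹) *
        mapF (K * A12 * K + A22 * K - K * A11 - A21) + mapF (Cx * Bx) := by
    show MN.toCols₁ = _
    rw [hMNeq, toCols₁_fromCols]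
  have hN : N = mapF Cx * (lamI Ax)⁻¹ * mapF (Bx * B1) +
      mapF Cx * ((lamI Ax)⁻¹ * mapF (Bx * A12) * (lamI (A22 + K * A12))⁻¹) *
        mapF (K * B1 + B2) := by
    show MN.toCols₂ = _
    rw [hMNeq, toCols₂_fromCols]
  have h1 : Theta * (lam • (1 : Matrix (Fin p) (Fin p) FF) - srtrW A11 A12 A21 A22 K) = M := by
    rw [hM]; exact goal1_lemma A11 A12 A21 A22 Ax Bx Cx K
  have h2 : Theta * srtrV A12 A22 B1 B2 K = N := by
    rw [hN]; exact goal2_lemma A12 A22 B1 B2 Ax Bx Cx K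
  have hTheta : IsUnit Theta := isUnit_Theta Ax Bx Cx hBx hCx
  have hS : IsUnit (lam • (1 : Matrix (Fin p) (Fin p) FF) - srtrW A11 A12 A21 A22 K) :=
    isUnit_S A11 A12 A21 A22 K
  have h3 : IsUnit M := by rw [← h1]; exact hTheta.mul hS
  have h4 : M⁻¹ * N = plantG A11 A12 A21 A22 B1 B2 := by
    rw [← h1, ← h2, Matrix.mul_inv_rev, Matrix.mul_assoc, ← Matrix.mul_assoc Theta⁻¹,
      nonsing_inv_mul _ ((Matrix.isUnit_iff_isUnit_det _).1 hTheta), Matrix.one_mul]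
    exact (plantG_eq A11 A12 A21 A22 B1 B2 K).symm
  have hq0 : (fromBlocks Ax (Bx * A12) 0 (A22 + K * A12)).charpoly ≠ 0 :=
    (Matrix.charpoly_monic _).ne_zero
  have hroots := q_roots A12 A22 Ax Bx K hAx hK
  have h5 : ∀ i j, StableF (M i j) := by
    intro i j
    obtain ⟨P, hP⟩ := MN_entry_form A11 A12 A21 A22 B1 B2 Ax Bx Cx K i (Sum.inl j)
    exact stable_entry hq0 hroots P hP
  have h6 : ∀ i j, StableF (N i j) := by
    intro i j
    obtain ⟨P, hP⟩ := MN_entry_form A11 A12 A21 A22 B1 B2 Ax Bx Cx K i (Sum.inr j)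
    exact stable_entry hq0 hroots P hP
  exact ⟨h1, h2, h3, h4, h5, h6⟩
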